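/- Let C be an inductively pierced neural code on n neurons. For any two piercing orders of C and for all k and v, the number of k-piercings in the first order equals the number of k-piercings in the second order, and the number of k-piercings contained in exactly v other place fields (i.e., with |σ| = v) in the first order equals the corresponding number in the second order. That is, the piercing numbers j_k and j_{k,v} are invariants of the code, independent of the choice of piercing order. -/

import Mathlib

open MvPolynomial Finset

noncomputable section NeuralCore

/-- The field with two elements. -/
abbrev F2 : Type := ZMod 2

/-- The variables of the polarized ring `S = F2[x_1,…,x_n,y_1,…,y_n]`:
`Sum.inl i` is `x_i` and `Sum.inr i` is `y_i`. -/
abbrev SV (n : ℕ) : Type := Fin n ⊕ Fin n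

/-- The polarized polynomial ring `S = F2[x_1,…,x_n,y_1,…,y_n]`. -/
abbrev PolyS (n : ℕ) : Type := MvPolynomial (SV n) F2

/-- The polynomial ring `R = F2[x_1,…,x_n]`. -/
abbrev PolyR (n : ℕ) : Type := MvPolynomial (Fin n) F2

/-- The pseudo-monomial `∏_{i ∈ σ} x_i ∏_{j ∈ τ} (1 - x_j)`. -/
def pseudoMonomial {n : ℕ} (σ τ : Finset (Fin n)) : PolyR n :=
  (∏ i ∈ σ, X i) * ∏ j ∈ τ, (1 - X j)

/-- A polynomial of `R` is a pseudo-monomial if it has the form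
`∏_{i ∈ σ} x_i ∏_{j ∈ τ} (1 - x_j)` with `σ ∩ τ = ∅`. -/
def IsPseudoMonomial {n : ℕ} (f : PolyR n) : Prop :=
  ∃ σ τ : Finset (Fin n), Disjoint σ τ ∧ f = pseudoMonomial σ τ

/-- `ρ_v = ∏_{i ∈ v} x_i ∏_{j ∉ v} (1 - x_j)`. -/
def rhoPoly {n : ℕ} (v : Finset (Fin n)) : PolyR n := pseudoMonomial v vᶜ

/-- The neural ideal `L = (ρ_v : v ∉ C)` of a neural code `C ⊆ 2^[n]`. -/
def neuralIdeal {n : ℕ} (C : Finset (Finset (Fin n))) : Ideal (PolyR n) :=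
  Ideal.span {f | ∃ v : Finset (Fin n), v ∉ C ∧ f = rhoPoly v}

/-- The canonical form `CF(C)`: the pseudo-monomials of the neural ideal divisible by
no other pseudo-monomial of the neural ideal. -/
def canonicalForm {n : ℕ} (C : Finset (Finset (Fin n))) : Set (PolyR n) :=
  {f | IsPseudoMonomial f ∧ f ∈ neuralIdeal C ∧
    ∀ g : PolyR n, IsPseudoMonomial g → g ∈ neuralIdeal C → g ∣ f → g = f}

/-- The polarization `∏_{i ∈ σ} x_i ∏_{j ∈ τ} y_j ∈ S` of the pseudo-monomial
determined by the pair `(σ, τ)`. -/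
def polarize {n : ℕ} (σ τ : Finset (Fin n)) : PolyS n :=
  (∏ i ∈ σ, X (Sum.inl i)) * ∏ j ∈ τ, X (Sum.inr j)

/-- The set of polarizations of the elements of the canonical form of `C`. -/
def polarizedCanonicalForm {n : ℕ} (C : Finset (Finset (Fin n))) : Set (PolyS n) :=
  {m | ∃ σ τ : Finset (Fin n), Disjoint σ τ ∧
    pseudoMonomial σ τ ∈ canonicalForm C ∧ m = polarize σ τ}

/-- The polarized neural ideal `J ⊆ S` of a neural code `C`. -/
def polarizedNeuralIdeal {n : ℕ} (C : Finset (Finset (Fin n))) : Ideal (PolyS n) :=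
  Ideal.span (polarizedCanonicalForm C)

/-- The deletion `C ∖ i` of neuron `i` from the code `C`. -/
def deleteNeuron {n : ℕ} (C : Finset (Finset (Fin n))) (i : Fin n) :
    Finset (Finset (Fin n)) :=
  C.image (fun c => c.erase i)

/-- Deletion of a set of neurons from the code `C`. -/
def deleteSet {n : ℕ} (C : Finset (Finset (Fin n))) (s : Finset (Fin n)) :
    Finset (Finset (Fin n)) :=
  C.image (fun c => c \ s)

/-- The interval `[σ, τ] = {γ : σ ⊆ γ ⊆ τ}`. -/
def codeInterval {n : ℕ} (σ τ : Finset (Fin n)) : Finset (Finset (Fin n)) :=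
  τ.powerset.filter (fun γ => σ ⊆ γ)

/-- Neuron `i` is a piercing of `C ∖ i` with piercing data `σ ⊆ τ ⊆ [n] ∖ {i}`:
`[σ,τ] ⊆ C∖i` and `C = (C∖i) ∪ [σ ∪ {i}, τ ∪ {i}]`. -/
def IsPiercingWith {n : ℕ} (C : Finset (Finset (Fin n))) (i : Fin n)
    (σ τ : Finset (Fin n)) : Prop :=
  σ ⊆ τ ∧ i ∉ τ ∧ codeInterval σ τ ⊆ deleteNeuron C i ∧
    C = deleteNeuron C i ∪ codeInterval (insert i σ) (insert i τ)

/-- Neuron `i` is a `k`-piercing of `C ∖ i`. -/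
def IsPiercing {n : ℕ} (C : Finset (Finset (Fin n))) (i : Fin n) (k : ℕ) : Prop :=
  ∃ σ τ : Finset (Fin n), IsPiercingWith C i σ τ ∧ τ.card = σ.card + k

/-- A code is inductively pierced if it is `{∅}` or some neuron is a `k`-piercing of the
code with it deleted, and the deleted code is inductively pierced. -/
inductive InductivelyPierced {n : ℕ} : Finset (Finset (Fin n)) → Prop
  | base : InductivelyPierced {∅}
  | step (C : Finset (Finset (Fin n))) (i : Fin n) (k : ℕ) :
      IsPiercing C i k → InductivelyPierced (deleteNeuron C i) → InductivelyPierced C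

/-- A piercing order for the code `C`: an ordering `ord 0, ord 1, …, ord (n-1)` of the
neurons together with piercing data `(sig j, tau j)` such that each `ord j` is a
piercing of the code obtained from `C` by deleting the later neurons. -/
structure PiercingOrder {n : ℕ} (C : Finset (Finset (Fin n))) where
  ord : Fin n ≃ Fin n
  sig : Fin n → Finset (Fin n)
  tau : Fin n → Finset (Fin n)
  piercing : ∀ j : Fin n,
    IsPiercingWith
      (deleteSet C (Finset.univ.filter (fun i => ∃ m : Fin n, j < m ∧ ord m = i)))
      (ord j) (sig j) (tau j)

/-- The rank of the piercing at step `j` of a piercing order. -/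
def PiercingOrder.kOf {n : ℕ} {C : Finset (Finset (Fin n))} (P : PiercingOrder C)
    (j : Fin n) : ℕ :=
  (P.tau j).card - (P.sig j).card

/-- `j_k`: the number of `k`-piercings in a piercing order. -/
def PiercingOrder.jnum {n : ℕ} {C : Finset (Finset (Fin n))} (P : PiercingOrder C)
    (k : ℕ) : ℕ :=
  (Finset.univ.filter (fun j : Fin n => P.kOf j = k)).card

/-- `j_{k,v}`: the number of `k`-piercings contained in exactly `v` other place fields
(`|σ| = v`) in a piercing order. -/
def PiercingOrder.jnum2 {n : ℕ} {C : Finset (Finset (Fin n))} (P : PiercingOrder C)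
    (k v : ℕ) : ℕ :=
  (Finset.univ.filter (fun j : Fin n => P.kOf j = k ∧ (P.sig j).card = v)).card

/-- The piercing ideal `p_i = (x_j : j ∈ [n]∖({i} ∪ τ)) + (y_j : j ∈ σ)`. -/
def piercingIdeal {n : ℕ} (i : Fin n) (σ τ : Finset (Fin n)) : Ideal (PolyS n) :=
  Ideal.span ({m | ∃ j : Fin n, j ≠ i ∧ j ∉ τ ∧ m = X (Sum.inl j)} ∪
    {m | ∃ j ∈ σ, m = X (Sum.inr j)})

/-! ### Multigraded structure on `S` -/

/-- The multidegree `(u, v)` of an exponent vector: total degree in the `x`'s and in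
the `y`'s, where `deg x_i = (1,0)` and `deg y_i = (0,1)`. -/
def mdeg {n : ℕ} (d : SV n →₀ ℕ) : ℕ × ℕ :=
  (∑ i : Fin n, d (Sum.inl i), ∑ i : Fin n, d (Sum.inr i))

/-- The total degree of an exponent vector in the standard grading. -/
def sdeg {n : ℕ} (d : SV n →₀ ℕ) : ℕ := ∑ v : SV n, d v

/-- The multidegree of a squarefree set of variables. -/
def tdegT {n : ℕ} (T : Finset (SV n)) : ℕ × ℕ :=
  ((T.filter (fun v => v.isLeft = true)).card, (T.filter (fun v => v.isLeft ≠ true)).card)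

/-- The multidegree-`(u,v)` homogeneous component of `S`, as an `F2`-subspace. -/
def homogComp (n : ℕ) (uv : ℕ × ℕ) : Submodule F2 (PolyS n) where
  carrier := {f | ∀ d ∈ f.support, mdeg d = uv}
  add_mem' := by
    intro a b ha hb d hd
    rcases Finset.mem_union.mp (MvPolynomial.support_add hd) with h | h
    · exact ha d h
    · exact hb d h
  zero_mem' := by intro d hd; simp at hd
  smul_mem' := by
    intro c f hf d hd
    exact hf d (MvPolynomial.support_smul hd)

/-- The degree-`i` homogeneous component of `S` in the standard grading. -/
def homogComp1 (n : ℕ) (i : ℕ) : Submodule F2 (PolyS n) where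
  carrier := {f | ∀ d ∈ f.support, sdeg d = i}
  add_mem' := by
    intro a b ha hb d hd
    rcases Finset.mem_union.mp (MvPolynomial.support_add hd) with h | h
    · exact ha d h
    · exact hb d h
  zero_mem' := by intro d hd; simp at hd
  smul_mem' := by
    intro c f hf d hd
    exact hf d (MvPolynomial.support_smul hd)

/-! ### Koszul complex computing `Tor^S_•(M, F2)` and Betti numbers

`Tor^S_w(M, F2)` is computed as the `w`-th homology of `K ⊗_S M` where `K` is the
Koszul resolution of `F2 = S/(x_1,…,y_n)` on the `2n` variables.  (Over `F2` no signs
are needed.)  Graded and multigraded Betti numbers are the dimensions of the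
corresponding graded components. -/

section Koszul

variable (n : ℕ) (M : Type) [AddCommGroup M] [Module (PolyS n) M]
  [Module F2 M] [IsScalarTower F2 (PolyS n) M]

/-- Basis indices in homological degree `w` of the Koszul complex: `w`-subsets of the
variables. -/
abbrev KIdx (w : ℕ) : Type := {T : Finset (SV n) // T.card = w}

/-- Homological degree `w` of `K ⊗_S M`. -/
abbrev kC (w : ℕ) : Type := KIdx n w → M

/-- The Koszul differential `(K ⊗_S M)_{w+1} → (K ⊗_S M)_w` (over `F2`, signs are
irrelevant): `d f T = ∑_{i ∉ T} x_i • f (T ∪ {i})`. -/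
def kd (w : ℕ) : kC n M (w + 1) →ₗ[PolyS n] kC n M w where
  toFun f T := ∑ i ∈ T.1ᶜ.attach,
    (X i.1 : PolyS n) • f ⟨insert i.1 T.1, by
      rw [Finset.card_insert_of_notMem (Finset.mem_compl.mp i.2), T.2]⟩
  map_add' f g := by
    funext T
    simp [Pi.add_apply, smul_add, Finset.sum_add_distrib]
  map_smul' c f := by
    funext T
    simp only [Pi.smul_apply, RingHom.id_apply, Finset.smul_sum]
    exact Finset.sum_congr rfl (fun i _ => smul_comm _ _ _)

/-- The cycles of `K ⊗_S M` in homological degree `w`. -/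
def kcycles : (w : ℕ) → Submodule (PolyS n) (kC n M w)
  | 0 => ⊤
  | (w + 1) => LinearMap.ker (kd n M w)

/-- The boundaries of `K ⊗_S M` in homological degree `w`. -/
def kboundaries (w : ℕ) : Submodule (PolyS n) (kC n M w) :=
  LinearMap.range (kd n M w)

/-- The `w`-th homology of `K ⊗_S M`, i.e. `Tor^S_w(M, F2)`. -/
def kHomology (w : ℕ) : Type :=
  ↥(kcycles n M w) ⧸ ((kboundaries n M w).comap (kcycles n M w).subtype)

instance (w : ℕ) : AddCommGroup (kHomology n M w) := by
  unfold kHomology; infer_instance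

instance (w : ℕ) : Module (PolyS n) (kHomology n M w) := by
  unfold kHomology; infer_instance

instance (w : ℕ) : Module F2 (kHomology n M w) := by
  unfold kHomology; infer_instance

/-- The (total) Betti number `β_w(M) = dim_{F2} Tor^S_w(M, F2)`. -/
def bettiNum (w : ℕ) : ℕ := Module.finrank F2 (kHomology n M w)

/-- Shifted graded component: the degree `uv - t` component of a multigraded module
with components `g`, interpreted as `⊥` when `t ≰ uv`. -/
def shiftComp (g : ℕ × ℕ → Submodule F2 M) (uv t : ℕ × ℕ) : Submodule F2 M :=
  if t.1 ≤ uv.1 ∧ t.2 ≤ uv.2 then g (uv.1 - t.1, uv.2 - t.2) else ⊥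

/-- The multidegree-`uv` component of `(K ⊗_S M)_w`, for a module `M` whose
multigrading is given by `g`; the basis element `e_T` has multidegree `tdegT T`. -/
def gradedKC (g : ℕ × ℕ → Submodule F2 M) (w : ℕ) (uv : ℕ × ℕ) :
    Submodule F2 (kC n M w) :=
  Submodule.pi Set.univ (fun T : KIdx n w => shiftComp (M := M) g uv (tdegT T.1))

/-- The multigraded Betti number `β_{w,u,v}(M) = dim_{F2} Tor^S_w(M, F2)_{(u,v)}`:
the dimension of the `(u,v)`-component of the `w`-th Koszul homology. -/
def bettiNumM (g : ℕ × ℕ → Submodule F2 M) (w : ℕ) (uv : ℕ × ℕ) : ℕ :=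
  Module.finrank F2
      ↥(gradedKC n M g w uv ⊓ (kcycles n M w).restrictScalars F2) -
    Module.finrank F2
      ↥(gradedKC n M g w uv ⊓ (kcycles n M w).restrictScalars F2 ⊓
        (kboundaries n M w).restrictScalars F2)

/-- The degree-`i` component of `(K ⊗_S M)_w` in the standard grading, for a module
`M` whose grading is given by `g1`; each basis element `e_T` has degree `w`. -/
def gradedKC1 (g1 : ℕ → Submodule F2 M) (w i : ℕ) : Submodule F2 (kC n M w) :=
  Submodule.pi Set.univ
    (fun _ : KIdx n w => if w ≤ i then g1 (i - w) else (⊥ : Submodule F2 M))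

/-- The graded Betti number `β_{w,i}(M) = dim_{F2} Tor^S_w(M, F2)_i` in the standard
grading. -/
def bettiNumGr (g1 : ℕ → Submodule F2 M) (w i : ℕ) : ℕ :=
  Module.finrank F2
      ↥(gradedKC1 n M g1 w i ⊓ (kcycles n M w).restrictScalars F2) -
    Module.finrank F2
      ↥(gradedKC1 n M g1 w i ⊓ (kcycles n M w).restrictScalars F2 ⊓
        (kboundaries n M w).restrictScalars F2)

end Koszul

/-! ### Betti numbers of quotients `S/J` and of ideals `J` -/

/-- The multigrading on `S ⧸ J` induced from `S` (for homogeneous `J`). -/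
def quotGradingM {n : ℕ} (J : Ideal (PolyS n)) (uv : ℕ × ℕ) :
    Submodule F2 (PolyS n ⧸ J) :=
  (homogComp n uv).map (Ideal.Quotient.mkₐ F2 J).toLinearMap

/-- The standard grading on `S ⧸ J` induced from `S` (for homogeneous `J`). -/
def quotGrading1 {n : ℕ} (J : Ideal (PolyS n)) (i : ℕ) :
    Submodule F2 (PolyS n ⧸ J) :=
  (homogComp1 n i).map (Ideal.Quotient.mkₐ F2 J).toLinearMap

/-- The standard grading on an ideal `J ⊆ S` viewed as an `S`-module. -/
def idealGrading1 {n : ℕ} (J : Ideal (PolyS n)) (i : ℕ) : Submodule F2 ↥J :=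
  (homogComp1 n i).comap ((J.subtype).restrictScalars F2)

/-- `β_w(S/J)`. -/
def quotBetti {n : ℕ} (J : Ideal (PolyS n)) (w : ℕ) : ℕ :=
  bettiNum n (PolyS n ⧸ J) w

/-- The graded Betti number `β_{w,i}(S/J)`. -/
def quotBettiGr {n : ℕ} (J : Ideal (PolyS n)) (w i : ℕ) : ℕ :=
  bettiNumGr n (PolyS n ⧸ J) (quotGrading1 J) w i

/-- The multigraded Betti number `β_{w,u,v}(S/J)`. -/
def quotBettiM {n : ℕ} (J : Ideal (PolyS n)) (w : ℕ) (uv : ℕ × ℕ) : ℕ :=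
  bettiNumM n (PolyS n ⧸ J) (quotGradingM J) w uv

/-- The graded Betti number `β_{w,i}(J)` of an ideal viewed as an `S`-module. -/
def idealBettiGr {n : ℕ} (J : Ideal (PolyS n)) (w i : ℕ) : ℕ :=
  bettiNumGr n ↥J (idealGrading1 J) w i

/-- The Castelnuovo–Mumford regularity of the ideal `J`:
`reg J = max { i - w : β_{w,i}(J) ≠ 0 }`. -/
def idealRegularity {n : ℕ} (J : Ideal (PolyS n)) : ℕ :=
  sSup {r : ℕ | ∃ w i : ℕ, idealBettiGr J w i ≠ 0 ∧ i = w + r}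

/-- The projective dimension of `S/J`: the largest `w` with `β_w(S/J) ≠ 0`. -/
def quotPdim {n : ℕ} (J : Ideal (PolyS n)) : ℕ :=
  sSup {w : ℕ | quotBetti J w ≠ 0}

/-- Integer binomial coefficient with the convention `binom a b = 0` unless
`0 ≤ b ≤ a`. -/
def binom (a b : ℤ) : ℤ :=
  if 0 ≤ a ∧ 0 ≤ b then ((a.toNat).choose b.toNat : ℤ) else 0

end NeuralCore

section PiercingInvariance

variable {n : ℕ} {𝒞 : Finset (Finset (Fin n))} {i i' : Fin n}
  {σ τ σ' τ' : Finset (Fin n)}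

lemma mem_codeInterval' {γ σ τ : Finset (Fin n)} :
    γ ∈ codeInterval σ τ ↔ σ ⊆ γ ∧ γ ⊆ τ := by
  simp [codeInterval, and_comm]

lemma mem_del_imp {c : Finset (Fin n)} (h : c ∈ deleteNeuron 𝒞 i) : i ∉ c := by
  simp only [deleteNeuron, mem_image] at h
  obtain ⟨d, _, rfl⟩ := h
  exact Finset.notMem_erase _ _

lemma mem_del_of {c : Finset (Fin n)} (hc : c ∈ 𝒞) (h : i ∉ c) :
    c ∈ deleteNeuron 𝒞 i := by
  simp only [deleteNeuron, mem_image]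
  exact ⟨c, hc, Finset.erase_eq_of_notMem h⟩

lemma del_mem_iff_exists {c : Finset (Fin n)} :
    c ∈ deleteNeuron 𝒞 i ↔ ∃ d ∈ 𝒞, d.erase i = c := by
  simp [deleteNeuron]

namespace IsPiercingWith

lemma del_subset (hp : IsPiercingWith 𝒞 i σ τ) : deleteNeuron 𝒞 i ⊆ 𝒞 := by
  intro c hc
  rw [hp.2.2.2]
  exact mem_union_left _ hc

lemma mem_of (hp : IsPiercingWith 𝒞 i σ τ) {c : Finset (Fin n)}
    (h1 : insert i σ ⊆ c) (h2 : c ⊆ insert i τ) : c ∈ 𝒞 := by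
  rw [hp.2.2.2]
  exact mem_union_right _ (mem_codeInterval'.mpr ⟨h1, h2⟩)

lemma bounds (hp : IsPiercingWith 𝒞 i σ τ) {c : Finset (Fin n)}
    (hc : c ∈ 𝒞) (hic : i ∈ c) : insert i σ ⊆ c ∧ c ⊆ insert i τ := by
  rw [hp.2.2.2] at hc
  rcases mem_union.mp hc with h | h
  · exact absurd hic (mem_del_imp h)
  · exact mem_codeInterval'.mp h

lemma min_mem (hp : IsPiercingWith 𝒞 i σ τ) : insert i σ ∈ 𝒞 :=
  hp.mem_of (subset_refl _) (insert_subset_insert _ hp.1)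

lemma max_mem (hp : IsPiercingWith 𝒞 i σ τ) : insert i τ ∈ 𝒞 :=
  hp.mem_of (insert_subset_insert _ hp.1) (subset_refl _)

lemma erase_mem (hp : IsPiercingWith 𝒞 i σ τ) {c : Finset (Fin n)} (hc : c ∈ 𝒞) :
    c.erase i ∈ 𝒞 :=
  hp.del_subset (del_mem_iff_exists.mpr ⟨c, hc, rfl⟩)

lemma not_mem_sigma (hp : IsPiercingWith 𝒞 i σ τ) : i ∉ σ := fun h => hp.2.1 (hp.1 h)

lemma card_lt (hp : IsPiercingWith 𝒞 i σ τ) :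
    (deleteNeuron 𝒞 i).card < 𝒞.card := by
  refine Finset.card_lt_card ⟨hp.del_subset, fun hsub => ?_⟩
  exact mem_del_imp (hsub hp.min_mem) (mem_insert_self i σ)

lemma eq_data (hp : IsPiercingWith 𝒞 i σ τ) (hq : IsPiercingWith 𝒞 i σ' τ') :
    σ = σ' ∧ τ = τ' := by
  have h1 : insert i σ' ⊆ insert i σ := (hq.bounds hp.min_mem (mem_insert_self _ _)).1
  have h2 : insert i σ ⊆ insert i σ' := (hp.bounds hq.min_mem (mem_insert_self _ _)).1
  have h3 : insert i τ ⊆ insert i τ' := (hq.bounds hp.max_mem (mem_insert_self _ _)).2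
  have h4 : insert i τ' ⊆ insert i τ := (hp.bounds hq.max_mem (mem_insert_self _ _)).2
  constructor
  · have := Finset.Subset.antisymm h2 h1
    rw [← Finset.erase_insert hp.not_mem_sigma, this, Finset.erase_insert hq.not_mem_sigma]
  · have := Finset.Subset.antisymm h3 h4
    rw [← Finset.erase_insert hp.2.1, this, Finset.erase_insert hq.2.1]

end IsPiercingWith

lemma exch_not_mem_sigma (hne : i ≠ i') (hp : IsPiercingWith 𝒞 i σ τ)
    (hq : IsPiercingWith 𝒞 i' σ' τ') : i ∉ σ' := by
  intro hi
  have hc1 : (insert i' σ').erase i ∈ 𝒞 := hp.erase_mem hq.min_mem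
  have hi' : i' ∈ (insert i' σ').erase i :=
    mem_erase.mpr ⟨hne.symm, mem_insert_self _ _⟩
  have := (hq.bounds hc1 hi').1
  exact Finset.notMem_erase i _ (this (mem_insert_of_mem hi))

lemma exch_tau (hne : i ≠ i') (hp : IsPiercingWith 𝒞 i σ τ)
    (hq : IsPiercingWith 𝒞 i' σ' τ') (h : i ∈ τ') : i' ∈ τ := by
  have hc : insert i' τ' ∈ 𝒞 := hq.max_mem
  have : insert i' τ' ⊆ insert i τ := (hp.bounds hc (mem_insert_of_mem h)).2
  rcases mem_insert.mp (this (mem_insert_self _ _)) with h' | h'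
  · exact absurd h'.symm hne
  · exact h'

lemma exch_sigma_subset (hne : i ≠ i') (hp : IsPiercingWith 𝒞 i σ τ)
    (hq : IsPiercingWith 𝒞 i' σ' τ') (h2 : i' ∈ τ) : σ' ⊆ σ := by
  have hcmem : insert i' (insert i σ) ∈ 𝒞 := by
    refine hp.mem_of (Finset.subset_insert _ _) ?_
    exact Finset.insert_subset (mem_insert_of_mem h2) (insert_subset_insert _ hp.1)
  have hb := (hq.bounds hcmem (mem_insert_self _ _)).1
  intro x hx
  have hxσ' : x ∈ insert i' (insert i σ) := hb (mem_insert_of_mem hx)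
  rcases mem_insert.mp hxσ' with h' | h'
  · exact absurd (h' ▸ hx) hq.not_mem_sigma
  · rcases mem_insert.mp h' with h'' | h''
    · exact absurd (h'' ▸ hx) (exch_not_mem_sigma hne hp hq)
    · exact h''

lemma exch_tau_erase (hne : i ≠ i') (hp : IsPiercingWith 𝒞 i σ τ)
    (hq : IsPiercingWith 𝒞 i' σ' τ') (h1 : i ∈ τ') (h2 : i' ∈ τ) :
    τ'.erase i ⊆ τ.erase i' := by
  have hsub : insert i' τ' ⊆ insert i τ := (hp.bounds hq.max_mem (mem_insert_of_mem h1)).2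
  intro x hx
  obtain ⟨hxi, hxτ'⟩ := mem_erase.mp hx
  have : x ∈ insert i τ := hsub (mem_insert_of_mem hxτ')
  rcases mem_insert.mp this with h | h
  · exact absurd h hxi
  · exact mem_erase.mpr ⟨fun he => hq.2.1 (he ▸ hxτ'), h⟩

lemma exch_card_tau (hne : i ≠ i') (hp : IsPiercingWith 𝒞 i σ τ)
    (hq : IsPiercingWith 𝒞 i' σ' τ') (h1 : i ∈ τ') : τ.card = τ'.card := by
  have h2 : i' ∈ τ := exch_tau hne hp hq h1
  have e1 : τ'.erase i = τ.erase i' :=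
    Finset.Subset.antisymm (exch_tau_erase hne hp hq h1 h2)
      (exch_tau_erase hne.symm hq hp h2 h1)
  rw [← Finset.card_erase_add_one h2, ← e1, Finset.card_erase_add_one h1]

lemma exch_sigma_eq (hne : i ≠ i') (hp : IsPiercingWith 𝒞 i σ τ)
    (hq : IsPiercingWith 𝒞 i' σ' τ') (h1 : i ∈ τ') : σ = σ' := by
  have h2 : i' ∈ τ := exch_tau hne hp hq h1
  exact Finset.Subset.antisymm (exch_sigma_subset hne.symm hq hp h1)
    (exch_sigma_subset hne hp hq h2)

/-- The main exchange lemma: if `i` and `i'` are both piercings of `𝒞`, then `i'`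
is still a piercing of `𝒞 ∖ i`, with data `(σ', τ' \ i)`. -/
lemma exch_del (hne : i ≠ i') (hp : IsPiercingWith 𝒞 i σ τ)
    (hq : IsPiercingWith 𝒞 i' σ' τ') :
    IsPiercingWith (deleteNeuron 𝒞 i) i' σ' (τ'.erase i) := by
  have hiσ' : i ∉ σ' := exch_not_mem_sigma hne hp hq
  refine ⟨?_, ?_, ?_, ?_⟩
  · intro x hx
    exact mem_erase.mpr ⟨fun h => hiσ' (h ▸ hx), hq.1 hx⟩
  · exact fun h => hq.2.1 (mem_erase.mp h).2
  · intro γ hγ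
    obtain ⟨h1, h2⟩ := mem_codeInterval'.mp hγ
    have hγτ' : γ ⊆ τ' := h2.trans (Finset.erase_subset _ _)
    have hγC' : γ ∈ deleteNeuron 𝒞 i' := hq.2.2.1 (mem_codeInterval'.mpr ⟨h1, hγτ'⟩)
    have hγC : γ ∈ 𝒞 := hq.del_subset hγC'
    have hiγ : i ∉ γ := fun h => (mem_erase.mp (h2 h)).1 rfl
    exact mem_del_of (mem_del_of hγC hiγ) (mem_del_imp hγC')
  · apply Finset.Subset.antisymm
    · intro c hc
      have hcC : c ∈ 𝒞 := hp.del_subset hc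
      have hic : i ∉ c := mem_del_imp hc
      by_cases hi'c : i' ∈ c
      · refine mem_union_right _ (mem_codeInterval'.mpr ⟨(hq.bounds hcC hi'c).1, ?_⟩)
        intro x hx
        rcases mem_insert.mp ((hq.bounds hcC hi'c).2 hx) with h | h
        · exact h ▸ mem_insert_self _ _
        · exact mem_insert_of_mem (mem_erase.mpr ⟨fun he => hic (he ▸ hx), h⟩)
      · exact mem_union_left _ (mem_del_of hc hi'c)
    · apply Finset.union_subset
      · intro c hc
        obtain ⟨d, hd, rfl⟩ := del_mem_iff_exists.mp hc
        have hdC : d ∈ 𝒞 := hp.del_subset hd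
        have hid : i ∉ d := mem_del_imp hd
        exact mem_del_of (hq.erase_mem hdC) (fun h => hid (Finset.erase_subset _ _ h))
      · intro γ hγ
        obtain ⟨h1, h2⟩ := mem_codeInterval'.mp hγ
        have hγC : γ ∈ 𝒞 :=
          hq.mem_of h1 (h2.trans (insert_subset_insert _ (Finset.erase_subset _ _)))
        have hiγ : i ∉ γ := by
          intro h
          rcases mem_insert.mp (h2 h) with h' | h'
          · exact hne h'
          · exact (mem_erase.mp h').1 rfl
        exact mem_del_of hγC hiγ


lemma deleteNeuron_eq_deleteSet {n : ℕ} (𝒞 : Finset (Finset (Fin n))) (i : Fin n) :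
    deleteNeuron 𝒞 i = deleteSet 𝒞 {i} := by
  unfold deleteNeuron deleteSet
  apply Finset.image_congr
  intro c _
  exact Finset.erase_eq c i

lemma deleteNeuron_deleteSet {n : ℕ} (𝒞 : Finset (Finset (Fin n)))
    (s : Finset (Fin n)) (i : Fin n) :
    deleteNeuron (deleteSet 𝒞 s) i = deleteSet 𝒞 (insert i s) := by
  unfold deleteNeuron deleteSet
  rw [Finset.image_image]
  apply Finset.image_congr
  intro c _
  simp only [Function.comp_apply]
  ext x
  simp only [Finset.mem_erase, Finset.mem_sdiff, Finset.mem_singleton, Finset.mem_insert]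
  tauto

lemma deleteNeuron_comm {n : ℕ} (𝒞 : Finset (Finset (Fin n))) (i j : Fin n) :
    deleteNeuron (deleteNeuron 𝒞 i) j = deleteNeuron (deleteNeuron 𝒞 j) i := by
  rw [deleteNeuron_eq_deleteSet 𝒞 i, deleteNeuron_eq_deleteSet 𝒞 j,
    deleteNeuron_deleteSet, deleteNeuron_deleteSet, Finset.pair_comm]

/-- The abstract notion of a piercing decomposition with its multiset of `(k, v)` data. -/
inductive Steps {n : ℕ} : Finset (Finset (Fin n)) → Multiset (ℕ × ℕ) → Prop
  | nil : Steps {∅} 0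
  | cons {𝒞 : Finset (Finset (Fin n))} (i : Fin n) (σ τ : Finset (Fin n))
      {M : Multiset (ℕ × ℕ)} :
      IsPiercingWith 𝒞 i σ τ → Steps (deleteNeuron 𝒞 i) M →
      Steps 𝒞 ((τ.card - σ.card, σ.card) ::ₘ M)

lemma no_pierce_empty {n : ℕ} {i : Fin n} {σ τ : Finset (Fin n)}
    (hp : IsPiercingWith {∅} i σ τ) : False := by
  have := hp.min_mem
  rw [Finset.mem_singleton] at this
  exact Finset.insert_ne_empty i σ this

lemma stepFirst {n : ℕ} {D : Finset (Finset (Fin n))} {M : Multiset (ℕ × ℕ)}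
    (h : Steps D M) : ∀ {j : Fin n} {a b : Finset (Fin n)},
    IsPiercingWith D j a b →
    ∃ M₁, Steps (deleteNeuron D j) M₁ ∧ M = (b.card - a.card, a.card) ::ₘ M₁ := by
  induction h with
  | nil => exact fun hj => absurd hj no_pierce_empty
  | @cons 𝒞 m σm τm M₂ hpm hsteps ih =>
    intro j a b hj
    by_cases hjm : j = m
    · subst hjm
      obtain ⟨rfl, rfl⟩ := hj.eq_data hpm
      exact ⟨M₂, hsteps, rfl⟩
    · have hne : m ≠ j := fun h => hjm h.symm
      have E1 : IsPiercingWith (deleteNeuron 𝒞 m) j a (b.erase m) := exch_del hne hpm hj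
      obtain ⟨M₃, hs₃, hM₂⟩ := ih E1
      have E2 : IsPiercingWith (deleteNeuron 𝒞 j) m σm (τm.erase j) :=
        exch_del (Ne.symm hne) hj hpm
      rw [deleteNeuron_comm] at hs₃
      refine ⟨((τm.erase j).card - σm.card, σm.card) ::ₘ M₃,
        Steps.cons m σm (τm.erase j) E2 hs₃, ?_⟩
      rw [hM₂]
      by_cases hjτ : j ∈ τm
      · have hmb : m ∈ b := exch_tau (Ne.symm hne) hj hpm hjτ
        have hσ : σm = a := (exch_sigma_eq hne hpm hj hmb).symm ▸ rfl
        have hσ' : a = σm := (exch_sigma_eq hne hpm hj hmb).symm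
        have hτc : τm.card = b.card := exch_card_tau hne hpm hj hmb
        rw [Finset.card_erase_of_mem hmb, Finset.card_erase_of_mem hjτ, hτc, hσ']
      · have hmb : m ∉ b := fun h => hjτ (exch_tau hne hpm hj h)
        rw [Finset.erase_eq_of_notMem hmb, Finset.erase_eq_of_notMem hjτ,
          Multiset.cons_swap]

theorem steps_unique {n : ℕ} : ∀ (N : ℕ) (𝒞 : Finset (Finset (Fin n))), 𝒞.card ≤ N →
    ∀ {M M' : Multiset (ℕ × ℕ)}, Steps 𝒞 M → Steps 𝒞 M' → M = M' := by
  intro N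
  induction N with
  | zero =>
    intro 𝒞 hC M M' h _
    exfalso
    cases h with
    | nil => simp at hC
    | cons i σ τ hp _ =>
      exact absurd (Nat.lt_of_lt_of_le (Finset.card_pos.mpr ⟨_, hp.min_mem⟩) hC)
        (lt_irrefl 0)
  | succ N ih =>
    intro 𝒞 hC M M' h h'
    cases h with
    | nil =>
      cases h' with
      | nil => rfl
      | cons i' σ' τ' hp' _ => exact absurd hp' no_pierce_empty
    | @cons _ i σ τ M₀ hp hs =>
      obtain ⟨M₁, hs₁, rfl⟩ := stepFirst h' hp
      rw [ih (deleteNeuron 𝒞 i) (Nat.lt_succ_iff.mp (lt_of_lt_of_le hp.card_lt hC)) hs hs₁]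

def laterSet {n : ℕ} (ord : Fin n ≃ Fin n) (t : ℕ) : Finset (Fin n) :=
  Finset.univ.filter (fun i => ∃ m : Fin n, t ≤ m.val ∧ ord m = i)

lemma laterSet_zero {n : ℕ} (ord : Fin n ≃ Fin n) : laterSet ord 0 = Finset.univ := by
  ext i
  simp only [laterSet, mem_filter, mem_univ, true_and, iff_true]
  exact ⟨ord.symm i, Nat.zero_le _, ord.apply_symm_apply i⟩

lemma laterSet_top {n : ℕ} (ord : Fin n ≃ Fin n) : laterSet ord n = ∅ := by
  ext i
  simp only [laterSet, mem_filter, mem_univ, true_and, Finset.notMem_empty, iff_false]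
  rintro ⟨m, hm, -⟩
  exact absurd m.isLt (Nat.not_lt.mpr hm)

lemma laterSet_succ {n : ℕ} (ord : Fin n ≃ Fin n) (t : ℕ) (ht : t < n) :
    insert (ord ⟨t, ht⟩) (laterSet ord (t + 1)) = laterSet ord t := by
  ext i
  simp only [laterSet, mem_insert, mem_filter, mem_univ, true_and]
  constructor
  · rintro (rfl | ⟨m, hm, rfl⟩)
    · exact ⟨⟨t, ht⟩, le_refl _, rfl⟩
    · exact ⟨m, Nat.le_of_succ_le hm, rfl⟩
  · rintro ⟨m, hm, rfl⟩
    rcases Nat.lt_or_ge t m.val with h | h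
    · exact Or.inr ⟨m, h, rfl⟩
    · have : m = ⟨t, ht⟩ := Fin.ext (Nat.le_antisymm h hm)
      exact Or.inl (by rw [this])

lemma deleteSet_empty {n : ℕ} (𝒞 : Finset (Finset (Fin n))) : deleteSet 𝒞 ∅ = 𝒞 := by
  unfold deleteSet
  simp

lemma deleteSet_univ {n : ℕ} (𝒞 : Finset (Finset (Fin n))) (hC : ∅ ∈ 𝒞) :
    deleteSet 𝒞 Finset.univ = {∅} := by
  unfold deleteSet
  ext c
  simp only [mem_image, Finset.mem_singleton]
  constructor
  · rintro ⟨d, -, rfl⟩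
    simp
  · rintro rfl
    exact ⟨∅, hC, by simp⟩

def pdata {n : ℕ} {𝒞 : Finset (Finset (Fin n))} (P : PiercingOrder 𝒞)
    (j : Fin n) : ℕ × ℕ := (P.kOf j, (P.sig j).card)

lemma piercing_order_steps_aux {n : ℕ} {𝒞 : Finset (Finset (Fin n))} (hC : ∅ ∈ 𝒞)
    (P : PiercingOrder 𝒞) : ∀ t : ℕ, t ≤ n →
    Steps (deleteSet 𝒞 (laterSet P.ord t))
      ((Finset.univ.filter (fun j : Fin n => j.val < t)).val.map (pdata P)) := by
  intro t
  induction t with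
  | zero =>
    intro _
    have h1 : (Finset.univ.filter (fun j : Fin n => j.val < 0)) = ∅ := by
      ext j; simp
    rw [laterSet_zero, deleteSet_univ 𝒞 hC, h1]
    exact Steps.nil
  | succ t ih =>
    intro ht
    have ht' : t < n := ht
    have hstep := P.piercing ⟨t, ht'⟩
    have hset : (Finset.univ.filter
        (fun i => ∃ m : Fin n, (⟨t, ht'⟩ : Fin n) < m ∧ P.ord m = i))
        = laterSet P.ord (t + 1) := by
      ext i
      simp only [laterSet, mem_filter, mem_univ, true_and]
      constructor
      · rintro ⟨m, hm, rfl⟩; exact ⟨m, hm, rfl⟩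
      · rintro ⟨m, hm, rfl⟩; exact ⟨m, hm, rfl⟩
    rw [hset] at hstep
    have hcode : deleteNeuron (deleteSet 𝒞 (laterSet P.ord (t + 1))) (P.ord ⟨t, ht'⟩)
        = deleteSet 𝒞 (laterSet P.ord t) := by
      rw [deleteNeuron_deleteSet, laterSet_succ]
    have hsteps' := ih (Nat.le_of_succ_le ht)
    rw [← hcode] at hsteps'
    have hfin : (Finset.univ.filter (fun j : Fin n => j.val < t + 1))
        = insert ⟨t, ht'⟩ (Finset.univ.filter (fun j : Fin n => j.val < t)) := by
      ext j
      simp only [mem_filter, mem_univ, true_and, mem_insert, Nat.lt_succ_iff_lt_or_eq,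
        Fin.ext_iff]
      tauto
    have hnotmem : (⟨t, ht'⟩ : Fin n) ∉
        (Finset.univ.filter (fun j : Fin n => j.val < t)) := by
      simp
    rw [hfin, Finset.insert_val_of_notMem hnotmem, Multiset.map_cons]
    exact Steps.cons _ _ _ hstep hsteps'

lemma piercing_order_steps {n : ℕ} {𝒞 : Finset (Finset (Fin n))} (hC : ∅ ∈ 𝒞)
    (P : PiercingOrder 𝒞) : Steps 𝒞 (Finset.univ.val.map (pdata P)) := by
  have h := piercing_order_steps_aux hC P n (le_refl n)
  rw [laterSet_top, deleteSet_empty] at h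
  have : (Finset.univ.filter (fun j : Fin n => j.val < n)) = Finset.univ := by
    ext j; simp [j.isLt]
  rwa [this] at h

lemma card_filter_eq_countP {n : ℕ} (f : Fin n → ℕ × ℕ) (p : ℕ × ℕ → Prop)
    [DecidablePred p] :
    (Finset.univ.filter (fun j : Fin n => p (f j))).card
      = (Finset.univ.val.map f).countP p := by
  rw [Multiset.countP_map]
  rfl


end PiercingInvariance



/-- The piercing numbers `j_k` and `j_{k,v}` of an inductively pierced
code are independent of the choice of piercing order. -/
theorem piercing_numbers_order_independent {n : ℕ}
    (C : Finset (Finset (Fin n))) (hC : ∅ ∈ C)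
    (hip : InductivelyPierced C) (P P' : PiercingOrder C) :
    ∀ k v : ℕ, P.jnum k = P'.jnum k ∧ P.jnum2 k v = P'.jnum2 k v := by
  have hM : Finset.univ.val.map (pdata P) = Finset.univ.val.map (pdata P') :=
    steps_unique C.card C (le_refl _) (piercing_order_steps hC P)
      (piercing_order_steps hC P')
  intro k v
  constructor
  · show P.jnum k = P'.jnum k
    unfold PiercingOrder.jnum
    have h1 := card_filter_eq_countP (pdata P) (fun x => x.1 = k)
    have h2 := card_filter_eq_countP (pdata P') (fun x => x.1 = k)
    simp only [pdata] at h1 h2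
    rw [hM] at h1
    convert h1.trans h2.symm <;> exact Finset.filter_congr (fun _ _ => Iff.rfl)
  · unfold PiercingOrder.jnum2
    have h1 := card_filter_eq_countP (pdata P) (fun x => x.1 = k ∧ x.2 = v)
    have h2 := card_filter_eq_countP (pdata P') (fun x => x.1 = k ∧ x.2 = v)
    simp only [pdata] at h1 h2
    rw [hM] at h1
    convert h1.trans h2.symm <;> exact Finset.filter_congr (fun _ _ => Iff.rfl)
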